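/- Let m be a non-negative integer and 1 ≤ j ≤ 2m+1. For all τ, v ∈ ℂ with Im τ > 0, a_j(τ, v+1) − a_j(τ, v) = (i/√(2m+2)) (−iτ)^{−1/2} Σ_{k=1}^{2m+2} e^{−πijk/(m+1)} e^{2πi(m+1)(v + k/(2m+2))²/τ}, where (−iτ)^{−1/2} is the principal branch of the square root. -/

import Mathlib

open Complex MeasureTheory

namespace KW

local notation "π" => (Real.pi : ℂ)

/-- Zwegers' function `h_{m+1;2m+2-j}`, in the integral form (5.9) of Kac–Wakimoto. -/
noncomputable def aFun (m j : ℕ) (τ v : ℂ) : ℂ :=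
  I * ∫ x : ℝ,
      exp (2 * π * I * ((m : ℂ) + 1) * (x : ℂ) ^ 2 * τ - 4 * π * ((m : ℂ) + 1) * (x : ℂ) * v) /
        (1 - exp (2 * π * ((x : ℂ) + I * (j : ℂ) / (2 * (m : ℂ) + 2))))


lemma integral_cexp_quad₀ {b : ℂ} (hb : b.re < 0) (c : ℂ) :
    ∫ x : ℝ, Complex.exp (b * (x:ℂ) ^ 2 + c * x) =
      (π / -b) ^ (1 / 2 : ℂ) * Complex.exp (-(c ^ 2 / (4 * b))) := by
  simpa using integral_cexp_quadratic hb c 0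

lemma integrable_cexp_quad₀ {b : ℂ} (hb : b.re < 0) (c : ℂ) :
    Integrable fun x : ℝ => Complex.exp (b * (x:ℂ) ^ 2 + c * x) := by
  simpa using integrable_cexp_quadratic' hb c 0

lemma cpow_ofReal_pos_mul {r : ℝ} (hr : 0 < r) {z : ℂ} (hz : z ≠ 0) (w : ℂ) :
    ((r : ℂ) * z) ^ w = (r : ℂ) ^ w * z ^ w := by
  have hr' : (r : ℂ) ≠ 0 := ofReal_ne_zero.mpr hr.ne'
  rw [cpow_def_of_ne_zero (mul_ne_zero hr' hz), Complex.log_ofReal_mul hr hz, add_mul,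
    Complex.exp_add, cpow_def_of_ne_zero hr', cpow_def_of_ne_zero hz,
    ← Complex.ofReal_log hr.le]

lemma denom_lb (m j : ℕ) (hj1 : 1 ≤ j) (hj2 : j ≤ 2 * m + 1) :
    ∃ δ : ℝ, 0 < δ ∧ ∀ x : ℝ,
      δ ≤ ‖1 - Complex.exp (2 * π * ((x : ℂ) + I * (j : ℂ) / (2 * (m : ℂ) + 2)))‖ := by
  set θ : ℝ := 2 * Real.pi * j / (2 * m + 2) with hθ
  have hjpos : (0:ℝ) < j := by exact_mod_cast hj1
  have hθpos : 0 < θ := by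
    rw [hθ]
    apply div_pos
    · nlinarith [Real.pi_pos]
    · positivity
  have hθlt : θ < 2 * Real.pi := by
    rw [hθ, div_lt_iff₀ (by positivity)]
    have hjlt : (j:ℝ) < 2*m+2 := by exact_mod_cast Nat.lt_succ_of_le hj2
    nlinarith [Real.pi_pos]
  have hc1 : Real.cos θ < 1 := by
    refine lt_of_le_of_ne (Real.cos_le_one θ) ?_
    intro h'
    have h := Real.cos_eq_one_iff_of_lt_of_lt (x := θ) (by linarith [Real.pi_pos]) hθlt
    exact hθpos.ne' (h.mp h')
  set c : ℝ := max (Real.cos θ) 0 with hcdef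
  have hc0 : 0 ≤ c := le_max_right _ _
  have hclt : c < 1 := max_lt hc1 one_pos
  have hpos : 0 < 1 - c ^ 2 := by nlinarith
  refine ⟨Real.sqrt (1 - c ^ 2), Real.sqrt_pos.mpr hpos, fun x => ?_⟩
  set z : ℂ := 2 * π * ((x : ℂ) + I * (j : ℂ) / (2 * (m : ℂ) + 2)) with hz
  have hzeq : z = ((2 * Real.pi * x : ℝ) : ℂ) + (θ : ℝ) * I := by
    rw [hz, hθ]; push_cast; ring
  have hre : z.re = 2 * Real.pi * x := by rw [hzeq]; simp
  have him : z.im = θ := by rw [hzeq]; simp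
  set t : ℝ := Real.exp (2 * Real.pi * x) with htdef
  have ht : 0 < t := Real.exp_pos _
  have hwre : (Complex.exp z).re = t * Real.cos θ := by rw [Complex.exp_re, hre, him]
  have hwim : (Complex.exp z).im = t * Real.sin θ := by rw [Complex.exp_im, hre, him]
  have hnorm : ‖1 - Complex.exp z‖ ^ 2 = 1 - 2 * t * Real.cos θ + t ^ 2 := by
    rw [Complex.sq_norm, Complex.normSq_apply, Complex.sub_re,
      Complex.sub_im, Complex.one_re, Complex.one_im, hwre, hwim]
    have hcs := Real.sin_sq_add_cos_sq θ
    linear_combination (t^2) * hcs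
  have hineq : 1 - c ^ 2 ≤ ‖1 - Complex.exp z‖ ^ 2 := by
    rw [hnorm]
    rcases le_or_gt (Real.cos θ) 0 with h | h
    · have hc : c = 0 := max_eq_right h
      rw [hc]; nlinarith [mul_nonneg ht.le (neg_nonneg.mpr h)]
    · have hc : c = Real.cos θ := max_eq_left h.le
      rw [hc]; nlinarith [sq_nonneg (t - Real.cos θ)]
  calc Real.sqrt (1 - c ^ 2) ≤ Real.sqrt (‖1 - Complex.exp z‖ ^ 2) := Real.sqrt_le_sqrt hineq
    _ = ‖1 - Complex.exp z‖ := Real.sqrt_sq (norm_nonneg _)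


/-- Equation (5.10) of Kac–Wakimoto. -/
theorem statement4 (m j : ℕ) (hj1 : 1 ≤ j) (hj2 : j ≤ 2 * m + 1) (τ v : ℂ) (hτ : 0 < τ.im) :
    aFun m j τ (v + 1) - aFun m j τ v =
      (I / (Real.sqrt (2 * (m : ℝ) + 2) : ℂ)) * (-(I * τ)) ^ (-(1 / 2 : ℂ)) *
        ∑ k ∈ Finset.Icc 1 (2 * m + 2),
          exp (-(π * I * (j : ℂ) * (k : ℂ) / ((m : ℂ) + 1))) *
            exp (2 * π * I * ((m : ℂ) + 1) * (v + (k : ℂ) / (2 * (m : ℂ) + 2)) ^ 2 / τ) := by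
  have hπ := Real.pi_pos
  have hτne : τ ≠ 0 := by intro h; rw [h] at hτ; simp at hτ
  set n : ℕ := 2 * m + 2 with hn
  set N : ℂ := 2 * (m : ℂ) + 2 with hN
  have hNeq : ((2 * (m:ℝ) + 2 : ℝ) : ℂ) = N := by rw [hN]; push_cast; ring
  have hNne : N ≠ 0 := by
    rw [← hNeq]; exact_mod_cast (by positivity : (2*(m:ℝ)+2) ≠ 0)
  have hm1 : ((m:ℂ) + 1) ≠ 0 := by
    have : (((m:ℝ) + 1 : ℝ) : ℂ) = (m:ℂ) + 1 := by push_cast; ring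
    rw [← this]; exact_mod_cast (by positivity : ((m:ℝ)+1) ≠ 0)
  have hnN : (n : ℂ) = N := by rw [hn, hN]; push_cast; ring
  set b : ℂ := 2 * π * I * ((m:ℂ) + 1) * τ with hbdef
  have hbre : b = ((2*Real.pi*((m:ℝ)+1) : ℝ) : ℂ) * (I * τ) := by rw [hbdef]; push_cast; ring
  have hb : b.re < 0 := by
    rw [hbre, Complex.re_ofReal_mul]
    have h2 : (I * τ).re = -τ.im := by simp
    rw [h2]
    have h1 : (0:ℝ) < 2*Real.pi*((m:ℝ)+1) := by positivity
    nlinarith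
  set D : ℝ → ℂ := fun x => 1 - Complex.exp (2 * π * ((x:ℂ) + I * (j:ℂ) / N)) with hD
  obtain ⟨δ, hδ, hDlb⟩ := denom_lb m j hj1 hj2
  rw [show (2 * (m : ℂ) + 2) = N from rfl] at hDlb
  have hDlb' : ∀ x : ℝ, δ ≤ ‖D x‖ := hDlb
  have hDne : ∀ x : ℝ, D x ≠ 0 := by
    intro x h0
    have := hDlb' x
    rw [h0, norm_zero] at this
    linarith
  have hcontD : Continuous D := by
    rw [hD]; fun_prop
  -- integrability
  have hint : ∀ c : ℂ, Integrable fun x : ℝ => Complex.exp (b * (x:ℂ)^2 + c * x) / D x := by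
    intro c
    have hmeas : AEStronglyMeasurable (fun x : ℝ => Complex.exp (b * (x:ℂ)^2 + c*x) / D x) volume := by
      refine Continuous.aestronglyMeasurable (Continuous.div (by fun_prop) hcontD hDne)
    refine ((integrable_cexp_quad₀ hb c).norm.const_mul δ⁻¹).mono' hmeas ?_
    filter_upwards with x
    rw [norm_div]
    have h1 : δ ≤ ‖D x‖ := hDlb' x
    rw [div_le_iff₀ (hδ.trans_le h1)]
    have h2 : 1 ≤ δ⁻¹ * ‖D x‖ := by
      rw [← inv_mul_cancel₀ hδ.ne']
      exact mul_le_mul_of_nonneg_left h1 (inv_nonneg.mpr hδ.le)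
    nlinarith [norm_nonneg (Complex.exp (b*(x:ℂ)^2+c*x))]
  -- rewrite aFun
  have hre : ∀ w : ℂ, aFun m j τ w
      = I * ∫ x : ℝ, Complex.exp (b * (x:ℂ)^2 + (-(2*N*π*w)) * x) / D x := by
    intro w
    unfold aFun
    congr 1
    congr 1
    funext x
    rw [hD, hbdef, hN]
    congr 2
    ring
  rw [hre (v+1), hre v, ← mul_sub, ← integral_sub (hint _) (hint _)]
  -- pointwise identity
  have hj2pi : Complex.exp ((j:ℂ) * (2*π*I)) = 1 := by
    simpa using Complex.exp_int_mul_two_pi_mul_I (j:ℤ)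
  have hpt : ∀ x : ℝ,
      Complex.exp (b*(x:ℂ)^2 + (-(2*N*π*(v+1)))*x) / D x
        - Complex.exp (b*(x:ℂ)^2 + (-(2*N*π*v))*x) / D x
      = ∑ l ∈ Finset.range n, Complex.exp (2*π*I*(j:ℂ)*(l:ℂ)/N)
          * Complex.exp (b*(x:ℂ)^2 + (-(2*N*π*(v+1)) + 2*π*(l:ℂ))*x) := by
    intro x
    have hDx := hDne x
    set E : ℂ := Complex.exp (2*π*((x:ℂ) + I*(j:ℂ)/N)) with hEdef
    have hEn : E ^ n = Complex.exp (2*π*N*(x:ℂ)) := by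
      rw [hEdef, ← Complex.exp_nat_mul]
      have harg : (n:ℂ) * (2*π*((x:ℂ) + I*(j:ℂ)/N)) = 2*π*N*(x:ℂ) + (j:ℂ)*(2*π*I) := by
        rw [hnN, hN]
        field_simp
      rw [harg, Complex.exp_add, hj2pi, mul_one]
    have hgeom : (∑ l ∈ Finset.range n, E ^ l) * (D x)
        = 1 - Complex.exp (2*π*N*(x:ℂ)) := by
      have h := geom_sum_mul E n
      rw [← hEn]
      have hDxE : D x = 1 - E := by rw [hD]
      rw [hDxE]
      linear_combination -h
    have hterm : ∀ l ∈ Finset.range n,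
        Complex.exp (2*π*I*(j:ℂ)*(l:ℂ)/N) * Complex.exp (b*(x:ℂ)^2 + (-(2*N*π*(v+1)) + 2*π*(l:ℂ))*x)
        = Complex.exp (b*(x:ℂ)^2 + (-(2*N*π*(v+1)))*x) * E ^ l := by
      intro l _
      rw [hEdef, ← Complex.exp_nat_mul, ← Complex.exp_add, ← Complex.exp_add]
      congr 1
      field_simp
      ring
    rw [Finset.sum_congr rfl hterm, ← Finset.mul_sum]
    have hB : Complex.exp (b*(x:ℂ)^2 + (-(2*N*π*v))*x)
        = Complex.exp (b*(x:ℂ)^2 + (-(2*N*π*(v+1)))*x) * Complex.exp (2*π*N*(x:ℂ)) := by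
      rw [← Complex.exp_add]; congr 1; ring
    rw [hB, div_sub_div_same, eq_comm, eq_div_iff hDx]
    linear_combination Complex.exp (b*(x:ℂ)^2 + (-(2*N*π*(v+1)))*x) * hgeom
  -- integrate term by term
  have h2 : (∫ x : ℝ, (Complex.exp (b*(x:ℂ)^2 + (-(2*N*π*(v+1)))*x) / D x
        - Complex.exp (b*(x:ℂ)^2 + (-(2*N*π*v))*x) / D x))
      = ∑ l ∈ Finset.range n, Complex.exp (2*π*I*(j:ℂ)*(l:ℂ)/N)
          * ((π / -b) ^ (1/2 : ℂ) * Complex.exp (-((-(2*N*π*(v+1)) + 2*π*(l:ℂ))^2 / (4*b)))) := by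
    rw [show (fun x : ℝ => Complex.exp (b*(x:ℂ)^2 + (-(2*N*π*(v+1)))*x) / D x
        - Complex.exp (b*(x:ℂ)^2 + (-(2*N*π*v))*x) / D x)
      = fun x : ℝ => ∑ l ∈ Finset.range n, Complex.exp (2*π*I*(j:ℂ)*(l:ℂ)/N)
          * Complex.exp (b*(x:ℂ)^2 + (-(2*N*π*(v+1)) + 2*π*(l:ℂ))*x) from funext hpt]
    rw [integral_finset_sum _ (fun l _ => ((integrable_cexp_quad₀ hb _).const_mul _))]
    refine Finset.sum_congr rfl fun l _ => ?_
    rw [integral_const_mul, integral_cexp_quad₀ hb]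
  rw [h2]
  -- reindex the target sum
  have hreindex : ∀ (F : ℕ → ℂ), ∑ k ∈ Finset.Icc 1 n, F k = ∑ l ∈ Finset.range n, F (n - l) := by
    intro F
    refine Finset.sum_nbij' (fun k => n - k) (fun l => n - l) ?_ ?_ ?_ ?_ ?_
    · intro a ha; simp only [Finset.mem_Icc] at ha; simp only [Finset.mem_range]; omega
    · intro a ha; simp only [Finset.mem_range] at ha; simp only [Finset.mem_Icc]; omega
    · intro a ha; simp only [Finset.mem_Icc] at ha; show n - (n - a) = a; omega
    · intro a ha; simp only [Finset.mem_range] at ha; show n - (n - a) = a; omega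
    · intro a ha; simp only [Finset.mem_Icc] at ha
      congr 1
      omega
  rw [hreindex]
  rw [Finset.mul_sum, Finset.mul_sum]
  refine Finset.sum_congr rfl fun l hl => ?_
  rw [Finset.mem_range] at hl
  have hln : l ≤ n := hl.le
  have hcast : ((n - l : ℕ) : ℂ) = N - (l:ℂ) := by rw [Nat.cast_sub hln, hnN]
  have hπc : (π : ℂ) ≠ 0 := Complex.ofReal_ne_zero.mpr Real.pi_ne_zero
  have h2m : (2*(m:ℂ)+2) ≠ 0 := by rw [← hN]; exact hNne
  have hwne : -(I*τ) ≠ 0 := by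
    simpa using mul_ne_zero Complex.I_ne_zero hτne
  have hargne : (-(I*τ)).arg ≠ Real.pi := by
    rw [Ne, Complex.arg_eq_pi_iff]
    rintro ⟨h1, -⟩
    have : (-(I*τ)).re = τ.im := by simp
    rw [this] at h1
    linarith
  -- the power prefactor
  have hpow : (π / -b) ^ (1/2 : ℂ)
      = ((Real.sqrt (2*(m:ℝ)+2) : ℝ) : ℂ)⁻¹ * (-(I*τ)) ^ (-(1/2 : ℂ)) := by
    have hfrac : (π / -b) = (((2*(m:ℝ)+2)⁻¹ : ℝ) : ℂ) * (-(I*τ))⁻¹ := by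
      have hfact : -b = (((2*(m:ℝ)+2)*Real.pi : ℝ) : ℂ) * (-(I*τ)) := by
        rw [hbdef]; push_cast; ring
      rw [hfact, div_mul_eq_div_div, ← Complex.ofReal_div,
        show Real.pi / ((2*(m:ℝ)+2)*Real.pi) = (2*(m:ℝ)+2)⁻¹ from by
          rw [mul_comm, ← div_div, div_self Real.pi_ne_zero, one_div],
        div_eq_mul_inv]
    rw [hfrac, cpow_ofReal_pos_mul (by positivity) (inv_ne_zero hwne),
      Complex.inv_cpow _ _ hargne, ← Complex.cpow_neg]
    congr 1
    have h12 : (1/2 : ℂ) = ((1/2 : ℝ) : ℂ) := by norm_num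
    have hr : ((2*(m:ℝ)+2)⁻¹) ^ ((1:ℝ)/2) = (Real.sqrt (2*(m:ℝ)+2))⁻¹ := by
      rw [Real.inv_rpow (by positivity), Real.sqrt_eq_rpow]
    rw [h12, ← Complex.ofReal_cpow (by positivity)]
    rw [show ((1:ℝ)/2 : ℝ) = (1/2 : ℝ) from rfl] at hr
    rw [hr, Complex.ofReal_inv]
  -- the root of unity factor
  have hroot : Complex.exp (2*π*I*(j:ℂ)*(l:ℂ)/N)
      = Complex.exp (-(π*I*(j:ℂ)*((n-l : ℕ):ℂ)/((m:ℂ)+1))) := by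
    rw [hcast]
    have harg : 2*π*I*(j:ℂ)*(l:ℂ)/N = -(π*I*(j:ℂ)*(N-(l:ℂ))/((m:ℂ)+1)) + (j:ℂ)*(2*π*I) := by
      rw [hN]
      field_simp
      ring
    rw [harg, Complex.exp_add, hj2pi, mul_one]
  -- the gaussian factor
  have div_I_mul : ∀ z w : ℂ, z / (I * w) = -(z / w * I) := by
    intro z w
    rcases eq_or_ne w 0 with rfl | hw
    · simp
    · field_simp
      linear_combination z * Complex.I_sq
  have hgauss : Complex.exp (-((-(2*N*π*(v+1)) + 2*π*(l:ℂ))^2 / (4*b)))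
      = Complex.exp (2*π*I*((m:ℂ)+1)*(v+((n-l:ℕ):ℂ)/N)^2/τ) := by
    rw [hcast]
    congr 1
    have hb4 : 4 * b = I * (8*π*((m:ℂ)+1)*τ) := by rw [hbdef]; ring
    rw [hb4, div_I_mul, hN]
    field_simp
    ring
  rw [hpow, hroot, hgauss]
  ring

end KW
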